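/- Fix integers n ≥ k ≥ 2 and a real A. Suppose real numbers x_{i,t}, for 2 ≤ i ≤ k+1 and 0 ≤ t ≤ n, satisfy: x_{k+1,t} = 0 for all t; x_{i,n} = A·i·C(n,i) for 2 ≤ i ≤ k; and the recurrence x_{i,t−1} = x_{i,t}·(1 − i/t) + x_{i+1,t}·(i/t) for all 2 ≤ i ≤ k and 1 ≤ t ≤ n. Then x_{i,t} = A·i·C(t,i)·S^{n−t}_{k−i} for all 2 ≤ i ≤ k and 0 ≤ t ≤ n. -/
import Mathlib


open scoped BigOperators

/-- `S^i_j = C(i,0) + C(i,1) + ⋯ + C(i,j)` (with `C(i,j) = 0` for `i < j`). -/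
def Scoef (i j : ℕ) : ℕ := ∑ l ∈ Finset.range (j + 1), i.choose l


lemma Scoef_zero_left (j : ℕ) : Scoef 0 j = 1 := by
  induction j with
  | zero => simp [Scoef]
  | succ j ih =>
    simp [Scoef, Finset.sum_range_succ] at ih ⊢
    simpa using ih

lemma Scoef_zero_right (m : ℕ) : Scoef m 0 = 1 := by simp [Scoef]

lemma Scoef_succ_succ (m j : ℕ) :
    Scoef (m + 1) (j + 1) = Scoef m (j + 1) + Scoef m j := by
  unfold Scoef
  rw [Finset.sum_range_succ' (fun l => (m+1).choose l) (j+1),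
      Finset.sum_range_succ' (fun l => m.choose l) (j+1)]
  simp only [Nat.choose_succ_succ, Finset.sum_add_distrib, Nat.choose_zero_right]
  ring

lemma aux1 (t i : ℕ) (ht : 1 ≤ t) :
    (t.choose i : ℝ) * (1 - (i : ℝ) / (t : ℝ)) = ((t - 1).choose i : ℝ) := by
  have htR : (t : ℝ) ≠ 0 := by positivity
  rcases lt_or_ge t i with h | h
  · have h' : t - 1 < i := by omega
    simp [Nat.choose_eq_zero_of_lt h, Nat.choose_eq_zero_of_lt h']
  · obtain ⟨s, rfl⟩ : ∃ s, t = s + 1 := ⟨t - 1, by omega⟩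
    have hnat : (s+1).choose i * (s + 1 - i) = (s + 1) * s.choose i := by
      have h1 := Nat.choose_succ_right_eq (s+1) i
      have h2 : (s+1) * s.choose i = (s+1).choose (i+1) * (i+1) := by
        simpa [Nat.succ_eq_add_one] using Nat.add_one_mul_choose_eq s i
      omega
    have hR : ((s+1).choose i : ℝ) * ((s:ℝ) + 1 - (i:ℝ)) = ((s:ℝ)+1) * (s.choose i : ℝ) := by
      have := congrArg (Nat.cast : ℕ → ℝ) hnat
      push_cast [Nat.cast_sub h] at this
      linarith [this]
    simp only [Nat.add_sub_cancel]
    field_simp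
    push_cast at hR ⊢
    linarith [hR]

lemma aux2 (t i : ℕ) (ht : 1 ≤ t) :
    ((i : ℝ) + 1) * (t.choose (i+1) : ℝ) * ((i : ℝ) / (t : ℝ))
      = (i : ℝ) * ((t - 1).choose i : ℝ) := by
  have htR : (t : ℝ) ≠ 0 := by positivity
  obtain ⟨s, rfl⟩ : ∃ s, t = s + 1 := ⟨t - 1, by omega⟩
  have hR : ((s:ℝ)+1) * (s.choose i : ℝ) = ((s+1).choose (i+1) : ℝ) * ((i:ℝ)+1) := by
    have := Nat.add_one_mul_choose_eq s i
    exact_mod_cast congrArg (Nat.cast : ℕ → ℝ) (by simpa [Nat.succ_eq_add_one] using this)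
  simp only [Nat.add_sub_cancel]
  field_simp
  push_cast at hR ⊢
  nlinarith [hR]
/-- Fix `n ≥ k ≥ 2` and `A : ℝ`.  If the reals `x i t`
(for `2 ≤ i ≤ k+1`, `0 ≤ t ≤ n`) satisfy `x (k+1) t = 0`, `x i n = A·i·C(n,i)` for
`2 ≤ i ≤ k`, and the recurrence `x i (t−1) = x i t·(1 − i/t) + x (i+1) t·(i/t)` for
`2 ≤ i ≤ k`, `1 ≤ t ≤ n`, then `x i t = A·i·C(t,i)·S^{n−t}_{k−i}` for all `2 ≤ i ≤ k`,
`0 ≤ t ≤ n`. -/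
theorem meanfield_recurrence_positive
    (n k : ℕ) (hk : 2 ≤ k) (hkn : k ≤ n) (A : ℝ) (x : ℕ → ℕ → ℝ)
    (htop : ∀ t ≤ n, x (k + 1) t = 0)
    (hinit : ∀ i, 2 ≤ i → i ≤ k → x i n = A * i * (n.choose i : ℝ))
    (hrec : ∀ i, 2 ≤ i → i ≤ k → ∀ t, 1 ≤ t → t ≤ n →
      x i (t - 1) = x i t * (1 - (i : ℝ) / (t : ℝ)) + x (i + 1) t * ((i : ℝ) / (t : ℝ))) :
    ∀ i, 2 ≤ i → i ≤ k → ∀ t ≤ n,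
      x i t = A * i * (t.choose i : ℝ) * (Scoef (n - t) (k - i) : ℝ) := by
  have key : ∀ m, m ≤ n → ∀ i, 2 ≤ i → i ≤ k →
      x i (n - m) = A * i * ((n - m).choose i : ℝ) * (Scoef m (k - i) : ℝ) := by
    intro m
    induction m with
    | zero =>
      intro _ i h2 hik
      simpa [Scoef_zero_left] using hinit i h2 hik
    | succ m ih =>
      intro hm i h2 hik
      have hmn : m ≤ n := Nat.le_of_succ_le hm
      set t := n - m with ht
      have ht1 : 1 ≤ t := by omega
      have htn : t ≤ n := Nat.sub_le n m
      have hts : n - (m + 1) = t - 1 := by omega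
      have htR : (t : ℝ) ≠ 0 := by positivity
      rw [hts, hrec i h2 hik t ht1 htn, ih hmn i h2 hik]
      rcases eq_or_lt_of_le hik with heq | hlt
      · subst heq
        rw [htop t htn]
        have hki : i - i = 0 := by omega
        rw [hki, Scoef_zero_right, Scoef_zero_right]
        push_cast
        linear_combination (A * (i : ℝ)) * aux1 t i ht1
      · have h2' : 2 ≤ i + 1 := by omega
        have hik' : i + 1 ≤ k := hlt
        rw [ih hmn (i+1) h2' hik']
        have hkj : k - i = (k - (i + 1)) + 1 := by omega
        rw [hkj, Scoef_succ_succ]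
        push_cast
        linear_combination (A * (i : ℝ) * (Scoef m (k - (i+1) + 1) : ℝ)) * aux1 t i ht1
          + (A * (Scoef m (k - (i+1)) : ℝ)) * aux2 t i ht1
  intro i h2 hik t htn
  have h := key (n - t) (Nat.sub_le n t) i h2 hik
  rwa [Nat.sub_sub_self htn] at h
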